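/- The complete graph K_n is antimagic for every n ≥ 3. -/

import Mathlib

open Classical in
/-- A graph is antimagic if there is a bijection from its edge set to `{1,...,m}`
(`m` the number of edges) such that all vertex sums are pairwise distinct. -/
def SimpleGraph.IsAntimagic {V : Type*} [Fintype V] (G : SimpleGraph V) : Prop :=
  ∃ f : Sym2 V → ℕ,
    Set.BijOn f ↑G.edgeFinset ↑(Finset.Icc 1 G.edgeFinset.card) ∧
    Function.Injective (fun v : V => ∑ e ∈ G.incidenceFinset v, f e)

namespace AntiAux

/-- the numeric label of the pair of values `a b` -/
def gval (a b : ℕ) : ℕ := (max a b).choose 2 + min a b + 1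

lemma gval_comm (a b : ℕ) : gval a b = gval b a := by
  simp [gval, max_comm, min_comm]

noncomputable def lab {n : ℕ} : Sym2 (Fin n) → ℕ :=
  Sym2.lift ⟨fun i j => gval i.val j.val, fun _ _ => gval_comm _ _⟩

lemma lab_mk {n : ℕ} (i j : Fin n) : lab s(i, j) = gval i.val j.val := rfl

lemma choose_two_add (j : ℕ) : (j + 1).choose 2 = j.choose 2 + j := by
  rw [Nat.choose_succ_succ', Nat.choose_one_right]
  exact Nat.add_comm _ _

lemma gval_of_lt {a b : ℕ} (h : a < b) : gval a b = b.choose 2 + a + 1 := by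
  rw [gval, max_eq_right h.le, min_eq_left h.le]

/-- strict monotonicity of label wrt second coordinate jump -/
lemma cross_lt {i j i' j' : ℕ} (h1 : i < j) (h2 : j < j') :
    j.choose 2 + i < j'.choose 2 + i' := by
  have e1 : (j + 1).choose 2 = j.choose 2 + j := choose_two_add j
  have e2 : (j + 1).choose 2 ≤ j'.choose 2 := Nat.choose_le_choose 2 (by omega)
  omega

lemma key_inj {i j i' j' : ℕ} (h1 : i < j) (h2 : i' < j')
    (h : j.choose 2 + i = j'.choose 2 + i') : j = j' ∧ i = i' := by
  rcases lt_trichotomy j j' with hlt | rfl | hgt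
  · exact absurd h (Nat.ne_of_lt (cross_lt h1 hlt))
  · omega
  · exact absurd h.symm (Nat.ne_of_lt (cross_lt h2 hgt))

lemma gval_strict {v v' w : ℕ} (h : v < v') (h1 : w ≠ v) (h2 : w ≠ v') :
    gval v w < gval v' w := by
  rcases lt_trichotomy w v with hwv | rfl | hvw
  · -- w < v < v'
    rw [gval_comm, gval_of_lt hwv, gval_comm, gval_of_lt (hwv.trans h)]
    have e1 : (v + 1).choose 2 = v.choose 2 + v := choose_two_add v
    have e2 : (v + 1).choose 2 ≤ v'.choose 2 := Nat.choose_le_choose 2 (by omega)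
    omega
  · exact absurd rfl h1
  · rcases lt_trichotomy w v' with hwv' | rfl | hv'w
    · -- v < w < v'
      rw [gval_of_lt hvw, gval_comm, gval_of_lt hwv']
      have e1 : (w + 1).choose 2 = w.choose 2 + w := choose_two_add w
      have e2 : (w + 1).choose 2 ≤ v'.choose 2 := Nat.choose_le_choose 2 (by omega)
      omega
    · exact absurd rfl h2
    · -- v < v' < w
      rw [gval_of_lt hvw, gval_of_lt hv'w]
      omega

lemma gval_le {a b n : ℕ} (hab : a < b) (hb : b < n) : gval a b ≤ n.choose 2 := by
  rw [gval_of_lt hab]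
  have e1 : (b + 1).choose 2 = b.choose 2 + b := choose_two_add b
  have e2 : (b + 1).choose 2 ≤ n.choose 2 := Nat.choose_le_choose 2 (by omega)
  omega

end AntiAux

open AntiAux Finset in
theorem stmt10 (n : ℕ) (hn : 3 ≤ n) : (SimpleGraph.completeGraph (Fin n)).IsAntimagic := by
  classical
  -- The edge finset, instance-independently
  have hedge : ∀ (inst : Fintype ((SimpleGraph.completeGraph (Fin n)).edgeSet)),
      @SimpleGraph.edgeFinset (Fin n) (SimpleGraph.completeGraph (Fin n)) inst =
        Finset.univ.filter (fun e : Sym2 (Fin n) => ¬ e.IsDiag) := by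
    intro inst
    ext e
    rw [SimpleGraph.mem_edgeFinset]
    simp only [Finset.mem_filter, Finset.mem_univ, true_and]
    have : (SimpleGraph.completeGraph (Fin n)).edgeSet = {e : Sym2 (Fin n) | ¬ e.IsDiag} :=
      SimpleGraph.edgeSet_top
    rw [this]
    rfl
  set X : Finset (Sym2 (Fin n)) :=
    Finset.univ.filter (fun e : Sym2 (Fin n) => ¬ e.IsDiag) with hX
  have hmemX : ∀ i j : Fin n, s(i, j) ∈ X ↔ i ≠ j := by
    intro i j
    simp [hX, Sym2.mk_isDiag_iff]
  have hcard : X.card = n.choose 2 := by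
    have h1 : Fintype.card {e : Sym2 (Fin n) // ¬ e.IsDiag}
        = (Fintype.card (Fin n)).choose 2 := Sym2.card_subtype_not_diag
    rw [Fintype.card_subtype, Fintype.card_fin] at h1
    exact h1
  -- The incidence finset, instance-independently
  have hincid : ∀ (v : Fin n) (inst : Fintype ((SimpleGraph.completeGraph (Fin n)).neighborSet v))
      (instD : DecidableEq (Fin n)),
      @SimpleGraph.incidenceFinset (Fin n) (SimpleGraph.completeGraph (Fin n)) v inst instD =
        (Finset.univ.erase v).image (fun w => s(v, w)) := by
    intro v inst instD
    ext e
    rw [SimpleGraph.mem_incidenceFinset]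
    constructor
    · intro he
      induction e using Sym2.ind with
      | _ a b =>
        rw [SimpleGraph.mk'_mem_incidenceSet_iff] at he
        obtain ⟨hab, hor⟩ := he
        have hab' : a ≠ b := hab
        rcases hor with rfl | rfl
        · exact Finset.mem_image.mpr ⟨b, Finset.mem_erase.mpr ⟨hab'.symm, Finset.mem_univ _⟩, rfl⟩
        · exact Finset.mem_image.mpr ⟨a, Finset.mem_erase.mpr ⟨hab', Finset.mem_univ _⟩, Sym2.eq_swap⟩
    · intro he
      rcases Finset.mem_image.mp he with ⟨w, hw, rfl⟩
      rw [SimpleGraph.mk'_mem_incidenceSet_iff]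
      exact ⟨(Finset.mem_erase.mp hw).1.symm, Or.inl rfl⟩
  -- maps into Icc
  have hmaps : ∀ e ∈ X, lab e ∈ Finset.Icc 1 (n.choose 2) := by
    intro e he
    induction e using Sym2.ind with
    | _ i j =>
      rw [hmemX] at he
      have hij : (i : ℕ) ≠ (j : ℕ) := fun h => he (Fin.ext h)
      rw [lab_mk, Finset.mem_Icc]
      rcases lt_or_gt_of_ne hij with h | h
      · exact ⟨by simp [gval], gval_le h j.isLt⟩
      · rw [gval_comm]; exact ⟨by simp [gval], gval_le h i.isLt⟩
  -- injectivity on edges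
  have hinj : Set.InjOn lab (X : Set (Sym2 (Fin n))) := by
    intro e he e' he' hee
    simp only [Finset.mem_coe] at he he'
    induction e using Sym2.ind with
    | _ i j =>
    induction e' using Sym2.ind with
    | _ i' j' =>
      rw [hmemX] at he he'
      have hij : (i : ℕ) ≠ (j : ℕ) := fun h => he (Fin.ext h)
      have hij' : (i' : ℕ) ≠ (j' : ℕ) := fun h => he' (Fin.ext h)
      rw [lab_mk, lab_mk] at hee
      rw [Sym2.eq_iff]
      have key : max (i : ℕ) j = max (i' : ℕ) j' ∧ min (i : ℕ) j = min (i' : ℕ) j' := by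
        have h1 : min (i : ℕ) j < max (i : ℕ) j := by omega
        have h2 : min (i' : ℕ) j' < max (i' : ℕ) j' := by omega
        have := key_inj h1 h2 (by unfold gval at hee; omega)
        omega
      have : ((i : ℕ) = i' ∧ (j : ℕ) = j') ∨ ((i : ℕ) = j' ∧ (j : ℕ) = i') := by omega
      rcases this with ⟨h1, h2⟩ | ⟨h1, h2⟩
      · exact Or.inl ⟨Fin.ext h1, Fin.ext h2⟩
      · exact Or.inr ⟨Fin.ext h1, Fin.ext h2⟩
  -- image equals Icc
  have himage : X.image lab = Finset.Icc 1 (n.choose 2) := by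
    apply Finset.eq_of_subset_of_card_le
    · intro k hk
      rcases Finset.mem_image.mp hk with ⟨e, he, rfl⟩
      exact hmaps e he
    · rw [Finset.card_image_of_injOn hinj, hcard, Nat.card_Icc]
      omega
  refine ⟨lab, ?_, ?_⟩
  · rw [hedge, hcard]
    refine ⟨fun e he => hmaps e (Finset.mem_coe.mp he), hinj, fun k hk => ?_⟩
    rw [Finset.mem_coe, ← himage] at hk
    rcases Finset.mem_image.mp hk with ⟨e, he, rfl⟩
    exact ⟨e, Finset.mem_coe.mpr he, rfl⟩
  · -- incidence sums
    set S : Fin n → ℕ := fun v => ∑ w ∈ Finset.univ.erase v, lab s(v, w) with hS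
    have hsum : ∀ (v : Fin n) (inst : Fintype ((SimpleGraph.completeGraph (Fin n)).neighborSet v))
        (instD : DecidableEq (Fin n)),
        ∑ e ∈ @SimpleGraph.incidenceFinset (Fin n) (SimpleGraph.completeGraph (Fin n)) v inst instD, lab e
          = S v := by
      intro v inst instD
      rw [hincid v inst instD, Finset.sum_image (by
        intro a _ b _ hab
        exact Sym2.congr_right.mp hab)]
      apply Finset.sum_congr
      · ext x; simp
      · intros; rfl
    -- strict monotonicity of vertex sums
    have hmono : ∀ v v' : Fin n, v < v' → S v < S v' := by
      intro v v' hvv'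
      rw [hS]
      simp only
      have hne : v ≠ v' := ne_of_lt hvv'
      have hsplit : ∀ u u' : Fin n, u ≠ u' →
          Finset.univ.erase u = insert u' ((Finset.univ : Finset (Fin n)) \ {u, u'}) := by
        intro u u' huu'
        ext x
        simp only [Finset.mem_erase, Finset.mem_univ, and_true, Finset.mem_insert,
          Finset.mem_sdiff, Finset.mem_singleton, true_and]
        by_cases h : x = u' <;> by_cases h2 : x = u <;> simp [h, h2] <;> tauto
      have hnotmem : ∀ u u' : Fin n, u' ∉ (Finset.univ : Finset (Fin n)) \ {u, u'} := by
        intro u u'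
        simp
      rw [hsplit v v' hne, hsplit v' v hne.symm,
        Finset.sum_insert (hnotmem v v'), Finset.sum_insert (by
          simp)]
      have hpair : ((Finset.univ : Finset (Fin n)) \ {v', v})
          = (Finset.univ : Finset (Fin n)) \ {v, v'} := by
        rw [Finset.pair_comm]
      rw [hpair]
      have hlabswap : lab s(v, v') = lab s(v', v) := by rw [Sym2.eq_swap]
      rw [hlabswap]
      have hnonempty : ((Finset.univ : Finset (Fin n)) \ {v, v'}).Nonempty := by
        rw [← Finset.card_pos, Finset.card_sdiff_of_subset (Finset.subset_univ _)]
        rw [Finset.card_pair hne, Finset.card_univ, Fintype.card_fin]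
        omega
      have hterm : ∀ w ∈ (Finset.univ : Finset (Fin n)) \ {v, v'},
          lab s(v, w) < lab s(v', w) := by
        intro w hw
        simp only [Finset.mem_sdiff, Finset.mem_insert, Finset.mem_singleton] at hw
        have hw1 : w ≠ v := fun h => hw.2 (Or.inl h)
        have hw2 : w ≠ v' := fun h => hw.2 (Or.inr h)
        rw [lab_mk, lab_mk]
        exact gval_strict hvv' (fun h => hw1 (Fin.ext h)) (fun h => hw2 (Fin.ext h))
      exact Nat.add_lt_add_left (Finset.sum_lt_sum_of_nonempty hnonempty hterm) _
    intro v v' hvv'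
    simp only at hvv'
    rw [hsum v _ _, hsum v' _ _] at hvv'
    by_contra hne
    rcases lt_or_gt_of_ne hne with h | h
    · exact Nat.ne_of_lt (hmono v v' h) hvv'
    · exact Nat.ne_of_lt (hmono v' v h) hvv'.symm
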